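/- arXiv:2410.07040 — 2 statements merged into one kernel-verified Lean document; each statement's English description precedes it below -/
import Mathlib

section
/- A finitely generated module M over the polynomial ring R[X] (with R a field) is a torsion module if and only if M is finite-dimensional as an R-vector space. -/
open Polynomial DirectSum

universe u v

theorem torsion_fd_aux (R : Type u) [Field R]
    (M : Type (max u v)) [AddCommGroup M] [Module R M] [Module (Polynomial R) M]
    [IsScalarTower R (Polynomial R) M] [Module.Finite (Polynomial R) M]
    (hT : Module.IsTorsion (Polynomial R) M) : FiniteDimensional R M := by
  obtain ⟨ι, hι, p, hp, e, ⟨eqv⟩⟩ := Module.equiv_directSum_of_isTorsion (R := R[X]) (M := M) hT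
  haveI : ∀ i, FiniteDimensional R (R[X] ⧸ R[X] ∙ (p i ^ e i)) := fun i =>
    (AdjoinRoot.powerBasis (pow_ne_zero (e i) (hp i).ne_zero)).finite
  haveI : FiniteDimensional R (⨁ i, (R[X] ⧸ R[X] ∙ (p i ^ e i))) :=
    Module.Finite.equiv
      (DirectSum.linearEquivFunOnFintype R ι (fun i => R[X] ⧸ R[X] ∙ (p i ^ e i))).symm
  exact Module.Finite.equiv (eqv.restrictScalars R).symm

theorem torsion_iff_finiteDimensional
    (R : Type*) [Field R]
    (M : Type*) [AddCommGroup M] [Module R M] [Module (Polynomial R) M]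
    [IsScalarTower R (Polynomial R) M]
    [Module.Finite (Polynomial R) M] :
    Module.IsTorsion (Polynomial R) M ↔ FiniteDimensional R M := by
  constructor
  · intro hT
    haveI : Module.Finite R[X] (ULift.{u_1} M) :=
      Module.Finite.equiv (ULift.moduleEquiv (R := R[X]) (M := M)).symm
    have hT' : Module.IsTorsion R[X] (ULift.{u_1} M) := by
      intro x
      obtain ⟨π, hπ⟩ := @hT x.down
      exact ⟨π, ULift.ext _ _ hπ⟩
    have := torsion_fd_aux.{u_1, u_2} R (ULift.{u_1} M) hT'
    exact Module.Finite.equiv (ULift.moduleEquiv (R := R) (M := M))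
  · intro hFD
    -- the "multiplication by X" endomorphism
    let f : Module.End R M :=
      { toFun := fun m => (X : R[X]) • m
        map_add' := fun a b => smul_add _ a b
        map_smul' := fun c m => (smul_comm c (X : R[X]) m).symm }
    have hf : ∀ m : M, f m = (X : R[X]) • m := fun _ => rfl
    let e : Module.AEval' f ≃ₗ[R[X]] M :=
      LinearEquiv.ofAEval f (LinearEquiv.refl R M) (fun m => hf m)
    have htor : Module.IsTorsion R[X] (Module.AEval' f) :=
      Module.AEval.isTorsion_of_finiteDimensional R M f
    intro m
    obtain ⟨q, hq⟩ := @htor (e.symm m)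
    refine ⟨q, ?_⟩
    simpa [Submonoid.smul_def, map_smul] using congrArg e hq
end

section
/- For the module Λ₁ over ℝ[d/dt] generated by x₁,…,x_n,u subject to the relations ẋ₁ = x₂, …, ẋ_{n−1} = x_n, ẋ_n = −a₀x₁ − ⋯ − a_{n−1}x_n + b u with b ≠ 0, the element x₁ is a basis of Λ₁, i.e., Λ₁ is free of rank 1 generated by x₁. -/
open scoped BigOperators

noncomputable def gen (n : ℕ) (i : Fin (n + 1)) : Fin (n + 1) → Polynomial ℝ :=
  Pi.single i 1

noncomputable def canonicalRelations (n : ℕ) (hn : 0 < n) (a : Fin n → ℝ) (b : ℝ) :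
    Submodule (Polynomial ℝ) (Fin (n + 1) → Polynomial ℝ) :=
  Submodule.span (Polynomial ℝ)
    ({ r | ∃ (i : ℕ) (h : i + 1 < n),
        r = (Polynomial.X : Polynomial ℝ) • gen n ⟨i, Nat.lt_succ_of_lt (Nat.lt_of_succ_lt h)⟩
            - gen n ⟨i + 1, Nat.lt_succ_of_lt h⟩ } ∪
      { (Polynomial.X : Polynomial ℝ) • gen n ⟨n - 1, Nat.lt_succ_of_lt (Nat.sub_lt hn one_pos)⟩
          + (∑ j : Fin n, Polynomial.C (a j) • gen n (Fin.castSucc j))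
          - Polynomial.C b • gen n (Fin.last n) })

noncomputable def cvec (n : ℕ) (a : Fin n → ℝ) (b : ℝ) : Fin (n + 1) → Polynomial ℝ :=
  fun i => if (i : ℕ) < n then Polynomial.X ^ (i : ℕ)
    else Polynomial.C b⁻¹ * (Polynomial.X ^ n + ∑ j : Fin n, Polynomial.C (a j) * Polynomial.X ^ (j : ℕ))

lemma cvec_lt (n : ℕ) (a : Fin n → ℝ) (b : ℝ) (i : Fin (n + 1)) (h : (i : ℕ) < n) :
    cvec n a b i = Polynomial.X ^ (i : ℕ) := if_pos h

lemma cvec_last (n : ℕ) (a : Fin n → ℝ) (b : ℝ) :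
    cvec n a b (Fin.last n) = Polynomial.C b⁻¹ *
      (Polynomial.X ^ n + ∑ j : Fin n, Polynomial.C (a j) * Polynomial.X ^ (j : ℕ)) :=
  if_neg (by simp [Fin.last])

noncomputable def phi (n : ℕ) (a : Fin n → ℝ) (b : ℝ) :
    (Fin (n + 1) → Polynomial ℝ) →ₗ[Polynomial ℝ] Polynomial ℝ :=
  Fintype.linearCombination (Polynomial ℝ) (cvec n a b)

lemma phi_gen (n : ℕ) (a : Fin n → ℝ) (b : ℝ) (i : Fin (n + 1)) :
    phi n a b (gen n i) = cvec n a b i := by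
  set_option linter.unnecessarySimpa false in
  simpa [phi, gen] using Fintype.linearCombination_apply_single (R := Polynomial ℝ)
    (v := cvec n a b) i (1 : Polynomial ℝ)

lemma hker (n : ℕ) (hn : 0 < n) (a : Fin n → ℝ) (b : ℝ) (hb : b ≠ 0) :
    canonicalRelations n hn a b ≤ LinearMap.ker (phi n a b) := by
  rw [canonicalRelations, Submodule.span_le]
  rintro r (⟨i, h, rfl⟩ | rfl)
  · simp only [SetLike.mem_coe, LinearMap.mem_ker, map_sub, map_smul, phi_gen]
    rw [cvec_lt n a b _ (Nat.lt_of_succ_lt h), cvec_lt n a b _ h]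
    simp [pow_succ, smul_eq_mul, mul_comm]
  · simp only [SetLike.mem_coe, LinearMap.mem_ker, map_sub, map_add, map_smul, map_sum,
      phi_gen]
    rw [cvec_lt n a b _ (Nat.sub_lt hn one_pos), cvec_last n a b]
    have h1 : (Polynomial.X : Polynomial ℝ) • ((Polynomial.X : Polynomial ℝ) ^ (n - 1)) = (Polynomial.X : Polynomial ℝ) ^ n := by
      rw [smul_eq_mul, ← pow_succ']
      congr 1
      omega
    have h2 : (Polynomial.C b) * (Polynomial.C b⁻¹ *
        (Polynomial.X ^ n + ∑ j : Fin n, Polynomial.C (a j) * Polynomial.X ^ (j : ℕ)))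
        = Polynomial.X ^ n + ∑ j : Fin n, Polynomial.C (a j) * Polynomial.X ^ (j : ℕ) := by
      rw [← mul_assoc, ← Polynomial.C_mul, mul_inv_cancel₀ hb]
      simp
    rw [h1]
    simp only [smul_eq_mul] at *
    rw [h2]
    have h3 : ∀ j : Fin n, ((Fin.castSucc j : Fin (n+1)) : ℕ) < n := fun j => by simp [j.isLt]
    have h4 : (∑ j : Fin n, Polynomial.C (a j) * cvec n a b (Fin.castSucc j))
        = ∑ j : Fin n, Polynomial.C (a j) * Polynomial.X ^ (j : ℕ) := by
      refine Finset.sum_congr rfl fun j _ => ?_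
      rw [cvec_lt n a b _ (h3 j)]
      simp
    rw [h4]
    ring

lemma memA (n : ℕ) (hn : 0 < n) (a : Fin n → ℝ) (b : ℝ) :
    ∀ i : ℕ, ∀ h : i < n,
      gen n ⟨i, Nat.lt_succ_of_lt h⟩ - (Polynomial.X : Polynomial ℝ) ^ i • gen n ⟨0, Nat.succ_pos n⟩
        ∈ canonicalRelations n hn a b := by
  intro i
  induction i with
  | zero => intro h; simp
  | succ i ih =>
    intro h
    have hi : i < n := Nat.lt_of_succ_lt h
    have hr : (Polynomial.X : Polynomial ℝ) • gen n ⟨i, Nat.lt_succ_of_lt hi⟩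
        - gen n ⟨i + 1, Nat.lt_succ_of_lt h⟩ ∈ canonicalRelations n hn a b := by
      apply Submodule.subset_span
      exact Or.inl ⟨i, h, rfl⟩
    have := Submodule.sub_mem _ (Submodule.smul_mem _ (Polynomial.X : Polynomial ℝ) (ih hi)) hr
    have heq : (Polynomial.X : Polynomial ℝ) • (gen n ⟨i, Nat.lt_succ_of_lt hi⟩
          - (Polynomial.X : Polynomial ℝ) ^ i • gen n ⟨0, Nat.succ_pos n⟩)
        - ((Polynomial.X : Polynomial ℝ) • gen n ⟨i, Nat.lt_succ_of_lt hi⟩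
          - gen n ⟨i + 1, Nat.lt_succ_of_lt h⟩)
        = gen n ⟨i + 1, Nat.lt_succ_of_lt h⟩
          - (Polynomial.X : Polynomial ℝ) ^ (i + 1) • gen n ⟨0, Nat.succ_pos n⟩ := by
      rw [smul_sub, smul_smul, ← pow_succ']
      abel
    rwa [heq] at this

lemma memB (n : ℕ) (hn : 0 < n) (a : Fin n → ℝ) (b : ℝ) (hb : b ≠ 0) :
    gen n (Fin.last n) - cvec n a b (Fin.last n) • gen n ⟨0, Nat.succ_pos n⟩
      ∈ canonicalRelations n hn a b := by
  set K := canonicalRelations n hn a b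
  set g0 := gen n ⟨0, Nat.succ_pos n⟩
  have hr : (Polynomial.X : Polynomial ℝ) • gen n ⟨n - 1, Nat.lt_succ_of_lt (Nat.sub_lt hn one_pos)⟩
      + (∑ j : Fin n, Polynomial.C (a j) • gen n (Fin.castSucc j))
      - Polynomial.C b • gen n (Fin.last n) ∈ K :=
    Submodule.subset_span (Or.inr rfl)
  have hA : gen n ⟨n - 1, Nat.lt_succ_of_lt (Nat.sub_lt hn one_pos)⟩
      - (Polynomial.X : Polynomial ℝ) ^ (n - 1) • g0 ∈ K := memA n hn a b _ (Nat.sub_lt hn one_pos)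
  have hS : ∀ j : Fin n, gen n (Fin.castSucc j) - (Polynomial.X : Polynomial ℝ) ^ (j : ℕ) • g0 ∈ K := by
    intro j
    have : (Fin.castSucc j) = ⟨(j : ℕ), Nat.lt_succ_of_lt j.isLt⟩ := by
      ext; simp
    rw [this]
    exact memA n hn a b _ j.isLt
  have hsum : ∑ j : Fin n, Polynomial.C (a j) •
      (gen n (Fin.castSucc j) - (Polynomial.X : Polynomial ℝ) ^ (j : ℕ) • g0) ∈ K :=
    Submodule.sum_mem _ fun j _ => Submodule.smul_mem _ _ (hS j)
  have key : Polynomial.C b • gen n (Fin.last n)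
      - (Polynomial.X ^ n + ∑ j : Fin n, Polynomial.C (a j) * Polynomial.X ^ (j : ℕ)) • g0 ∈ K := by
    have := Submodule.add_mem _ (Submodule.add_mem _
      (Submodule.smul_mem _ (Polynomial.X : Polynomial ℝ) hA) hsum) (Submodule.neg_mem _ hr)
    have heq : (Polynomial.X : Polynomial ℝ) • (gen n ⟨n - 1, Nat.lt_succ_of_lt (Nat.sub_lt hn one_pos)⟩
          - (Polynomial.X : Polynomial ℝ) ^ (n - 1) • g0)
        + (∑ j : Fin n, Polynomial.C (a j) •
            (gen n (Fin.castSucc j) - (Polynomial.X : Polynomial ℝ) ^ (j : ℕ) • g0))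
        + -((Polynomial.X : Polynomial ℝ) • gen n ⟨n - 1, Nat.lt_succ_of_lt (Nat.sub_lt hn one_pos)⟩
          + (∑ j : Fin n, Polynomial.C (a j) • gen n (Fin.castSucc j))
          - Polynomial.C b • gen n (Fin.last n))
        = Polynomial.C b • gen n (Fin.last n)
          - (Polynomial.X ^ n + ∑ j : Fin n, Polynomial.C (a j) * Polynomial.X ^ (j : ℕ)) • g0 := by
      rw [smul_sub, smul_smul, ← pow_succ', Nat.sub_add_cancel hn, add_smul, Finset.sum_smul]
      simp only [smul_sub, Finset.sum_sub_distrib, mul_smul]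
      abel
    rwa [heq] at this
  have := Submodule.smul_mem K (Polynomial.C b⁻¹) key
  have heq2 : Polynomial.C b⁻¹ • (Polynomial.C b • gen n (Fin.last n)
      - (Polynomial.X ^ n + ∑ j : Fin n, Polynomial.C (a j) * Polynomial.X ^ (j : ℕ)) • g0)
      = gen n (Fin.last n) - cvec n a b (Fin.last n) • g0 := by
    rw [smul_sub, smul_smul, smul_smul, ← Polynomial.C_mul, inv_mul_cancel₀ hb, Polynomial.C_1,
      one_smul]
    congr 1
    rw [cvec, if_neg (by simp [Fin.last])]
  rwa [heq2] at this

lemma memAll (n : ℕ) (hn : 0 < n) (a : Fin n → ℝ) (b : ℝ) (hb : b ≠ 0) (i : Fin (n + 1)) :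
    gen n i - cvec n a b i • gen n ⟨0, Nat.succ_pos n⟩ ∈ canonicalRelations n hn a b := by
  by_cases h : (i : ℕ) < n
  · have hi : i = ⟨(i : ℕ), Nat.lt_succ_of_lt h⟩ := by ext; rfl
    rw [hi]
    rw [cvec_lt n a b _ h]
    exact memA n hn a b _ h
  · have hi : i = Fin.last n := by
      ext
      simp only [Fin.last]
      omega
    rw [hi]
    exact memB n hn a b hb

theorem canonical_form_module_free_rank_one_basis_x1
    (n : ℕ) (hn : 0 < n) (a : Fin n → ℝ) (b : ℝ) (hb : b ≠ 0) :
    ∃ e : ((Fin (n + 1) → Polynomial ℝ) ⧸ canonicalRelations n hn a b)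
          ≃ₗ[Polynomial ℝ] Polynomial ℝ,
      e (Submodule.Quotient.mk (gen n ⟨0, Nat.succ_pos n⟩)) = 1 := by
  set K := canonicalRelations n hn a b
  let f := K.liftQ (phi n a b) (hker n hn a b hb)
  let g := LinearMap.toSpanSingleton (Polynomial ℝ) _
    (Submodule.Quotient.mk (p := K) (gen n ⟨0, Nat.succ_pos n⟩))
  have hphi0 : phi n a b (gen n ⟨0, Nat.succ_pos n⟩) = 1 := by
    rw [phi_gen, cvec_lt n a b _ (by simpa using hn)]
    simp
  have hphi0' : phi n a b (gen n 0) = 1 := by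
    convert hphi0 using 3
    simp [Fin.ext_iff]
  have h1 : f.comp g = LinearMap.id := by
    ext p
    simp [f, g, LinearMap.toSpanSingleton, Submodule.Quotient.mk_smul, Submodule.liftQ_apply, hphi0, hphi0']
  have h2 : g.comp f = LinearMap.id := by
    apply Submodule.linearMap_qext
    apply Module.Basis.ext (Pi.basisFun (Polynomial ℝ) (Fin (n + 1)))
    intro i
    have hb1 : (Pi.basisFun (Polynomial ℝ) (Fin (n + 1))) i = gen n i := by
      simp [gen, Pi.basisFun_apply]
    rw [hb1]
    simp only [LinearMap.comp_apply, Submodule.mkQ_apply, Submodule.liftQ_apply, phi_gen, f, g,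
      LinearMap.toSpanSingleton_apply]
    rw [← Submodule.Quotient.mk_smul, LinearMap.id_apply, Submodule.Quotient.eq]
    simpa [neg_sub] using Submodule.neg_mem _ (memAll n hn a b hb i)
  refine ⟨LinearEquiv.ofLinear f g h1 h2, ?_⟩
  simpa [f, Submodule.liftQ_apply] using hphi0
end
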